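/- Let T > 0, f0 > 0, φ > 0, g0 ∈ ℝ and κ ∈ ℝ with κ − g0/2 − √(φ·f0) ≠ 0. Define γ := √(φ/f0), ζ := (κ − g0/2 + √(φ·f0))/(κ − g0/2 − √(φ·f0)), θ0(t) := (1 + ζ·exp(2γ(T−t)))/(1 − ζ·exp(2γ(T−t))), and h0(t) := −g0/2 + √(φ·f0)·θ0(t). Assume ζ·exp(2γ(T−t)) ≠ 1 for every t ∈ [0,T]. Then h0 solves the Riccati terminal value problem: for every t ∈ [0,T], h0′(t) + h0(t)²/f0 + (g0/f0)·h0(t) + g0²/(4f0) − φ = 0, and h0(T) = −κ. -/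

import Mathlib

open Real Set

theorem stmt_0 (T f0 φ g0 κ : ℝ) (hT : 0 < T) (hf0 : 0 < f0) (hφ : 0 < φ)
    (hκ : κ - g0 / 2 - Real.sqrt (φ * f0) ≠ 0)
    (γ ζ : ℝ)
    (hγ : γ = Real.sqrt (φ / f0))
    (hζ : ζ = (κ - g0 / 2 + Real.sqrt (φ * f0)) / (κ - g0 / 2 - Real.sqrt (φ * f0)))
    (θ0 h0 : ℝ → ℝ)
    (hθ0 : ∀ t, θ0 t = (1 + ζ * Real.exp (2 * γ * (T - t))) /
                       (1 - ζ * Real.exp (2 * γ * (T - t))))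
    (hh0 : ∀ t, h0 t = -g0 / 2 + Real.sqrt (φ * f0) * θ0 t)
    (hnd : ∀ t ∈ Set.Icc (0 : ℝ) T, ζ * Real.exp (2 * γ * (T - t)) ≠ 1) :
    (∀ t ∈ Set.Icc (0 : ℝ) T,
        deriv h0 t + (h0 t) ^ 2 / f0 + (g0 / f0) * h0 t + g0 ^ 2 / (4 * f0) - φ = 0)
    ∧ h0 T = -κ := by
  have hs : 0 < Real.sqrt (φ * f0) := Real.sqrt_pos.mpr (by positivity)
  have hsq : Real.sqrt (φ * f0) ^ 2 = φ * f0 := Real.sq_sqrt (by positivity)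
  have hsγ : Real.sqrt (φ * f0) * γ = φ := by
    rw [hγ, ← Real.sqrt_mul (by positivity : (0:ℝ) ≤ φ * f0)]
    rw [show φ * f0 * (φ / f0) = φ ^ 2 by field_simp]
    exact Real.sqrt_sq hφ.le
  have hfun : h0 = fun τ => -g0 / 2 + Real.sqrt (φ * f0) *
      ((1 + ζ * Real.exp (2 * γ * (T - τ))) / (1 - ζ * Real.exp (2 * γ * (T - τ)))) :=
    funext fun τ => by rw [hh0, hθ0]
  constructor
  · intro t ht
    set E := Real.exp (2 * γ * (T - t)) with hE
    have hden : 1 - ζ * E ≠ 0 := by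
      intro h; exact hnd t ht (by linarith)
    have hEd : HasDerivAt (fun τ => Real.exp (2 * γ * (T - τ))) (E * (-(2 * γ))) t := by
      have h1 : HasDerivAt (fun τ => 2 * γ * (T - τ)) (2 * γ * (-1)) t := by
        simpa using ((hasDerivAt_id t).const_sub T).const_mul (2 * γ)
      have := h1.exp
      convert this using 1
      rw [← hE]; ring
    have hnum : HasDerivAt (fun τ => 1 + ζ * Real.exp (2 * γ * (T - τ)))
        (ζ * (E * (-(2 * γ)))) t := (hEd.const_mul ζ).const_add 1
    have hdend : HasDerivAt (fun τ => 1 - ζ * Real.exp (2 * γ * (T - τ)))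
        (-(ζ * (E * (-(2 * γ))))) t := (hEd.const_mul ζ).const_sub 1
    have hθd := hnum.div hdend hden
    have hh : HasDerivAt h0 (Real.sqrt (φ * f0) *
        ((ζ * (E * (-(2 * γ))) * (1 - ζ * E) - (1 + ζ * E) * -(ζ * (E * (-(2 * γ))))) /
          (1 - ζ * E) ^ 2)) t := by
      rw [hfun]
      exact (hθd.const_mul (Real.sqrt (φ * f0))).const_add (-g0 / 2)
    rw [hh.deriv, hh0 t, hθ0 t, ← hE]
    generalize Real.sqrt (φ * f0) = s at hsq hsγ
    field_simp
    linear_combination (-64*f0*(ζ*E))*hsγ + (16*(1+ζ*E)^2)*hsq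
  · rw [hh0, hθ0]
    simp only [sub_self, mul_zero, Real.exp_zero, mul_one]
    generalize hgen : Real.sqrt (φ * f0) = s at hκ hζ hs
    have h1 : 1 - ζ = -(2 * s) / (κ - g0 / 2 - s) := by
      rw [hζ, one_sub_div hκ]; congr 1; ring
    have h2 : 1 + ζ = 2 * (κ - g0 / 2) / (κ - g0 / 2 - s) := by
      rw [hζ, one_add_div hκ]; congr 1; ring
    rw [h1, h2, div_div_div_cancel_right₀ hκ]
    rw [div_neg, mul_neg, mul_div_assoc]
    field_simp; ring
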